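/- Let G be a tree regular pattern graph on a pattern set 𝓡 (every r ≠ 1_d has a singleton parent set) and let p be a joint pmf satisfying marginal positivity, and fix θ : ((j : Fin d) → X_j) → ℝ. Let r ∈ 𝓡 with r ≠ 1_d and let 1_d = s_0, s_1, …, s_m = r be its unique path in Π_r. Define iterated conditional expectations h_0 = θ and, for k = 1, …, m, h_k(ℓ) = (Σ_{ℓ' ~_{s_k} ℓ} h_{k−1}(ℓ') · p(ℓ', s_{k−1})) / p_{s_k}(ℓ, s_{k−1}) (the conditional expectation E[h_{k−1}(L) | L_{s_k} = ℓ_{s_k}, R = s_{k−1}]). Then for every ℓ, the path regression function equals the iterated conditional expectation: μ_{Ξ,r}(ℓ) = h_m(ℓ), where Ξ is the unique path from 1_d to r. -/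

import Mathlib

open Finset

noncomputable section

/-- Response patterns: binary vectors of length `d`, ordered pointwise (`false < true`). -/
abbrev Pat (d : ℕ) := Fin d → Bool

/-- The all-true (fully observed) pattern `1_d`. -/
def allOnes (d : ℕ) : Pat d := fun _ => true

variable {d : ℕ}


instance (r s : Pat d) : Decidable (r ≤ s) :=
  decidable_of_iff (∀ j, r j ≤ s j) (by simp [Pi.le_def])

instance (r s : Pat d) : Decidable (r < s) :=
  decidable_of_iff (r ≤ s ∧ ¬ s ≤ r) lt_iff_le_not_ge.symm

/-- Two full-data values have the same observed part under pattern `r`. -/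
def agree {X : Fin d → Type*} (r : Pat d) (ℓ ℓ' : ∀ j, X j) : Prop :=
  ∀ j, r j = true → ℓ j = ℓ' j

instance {X : Fin d → Type*} [∀ j, DecidableEq (X j)] (r : Pat d) (ℓ ℓ' : ∀ j, X j) :
    Decidable (agree r ℓ ℓ') := by
  unfold agree; infer_instance

variable {X : Fin d → Type*} [∀ j, Fintype (X j)] [∀ j, DecidableEq (X j)]

/-- `p(ℓ, A) = Σ_{s ∈ A} p(ℓ, s)`. -/
def jointA (p : (∀ j, X j) → Pat d → ℝ) (ℓ : ∀ j, X j) (A : Finset (Pat d)) : ℝ :=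
  ∑ s ∈ A, p ℓ s

/-- `p_r(ℓ, s) = Σ_{ℓ' ~_r ℓ} p(ℓ', s)` : observed-data mass under pattern `r`. -/
def obsP (p : (∀ j, X j) → Pat d → ℝ) (r : Pat d) (ℓ : ∀ j, X j) (s : Pat d) : ℝ :=
  ∑ ℓ' ∈ univ.filter (fun ℓ' => agree r ℓ ℓ'), p ℓ' s

/-- `p_r(ℓ, A) = Σ_{s ∈ A} p_r(ℓ, s)`. -/
def obsPA (p : (∀ j, X j) → Pat d → ℝ) (r : Pat d) (ℓ : ∀ j, X j) (A : Finset (Pat d)) : ℝ :=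
  ∑ s ∈ A, obsP p r ℓ s

/-- `p` is a joint pmf on (full data) × (pattern set `𝓡`): nonnegative with total sum 1. -/
def IsJointPMF (𝓡 : Finset (Pat d)) (p : (∀ j, X j) → Pat d → ℝ) : Prop :=
  (∀ ℓ, ∀ r ∈ 𝓡, 0 ≤ p ℓ r) ∧ (∑ ℓ : ∀ j, X j, ∑ r ∈ 𝓡, p ℓ r) = 1

/-- Marginal positivity: `p_r(ℓ, r) > 0` for every `ℓ` and every `r ∈ 𝓡`. -/
def MargPos (𝓡 : Finset (Pat d)) (p : (∀ j, X j) → Pat d → ℝ) : Prop :=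
  ∀ ℓ, ∀ r ∈ 𝓡, 0 < obsP p r ℓ r

/-- Full positivity: `p(ℓ, r) > 0` for every `ℓ` and every `r ∈ 𝓡`. -/
def FullPos (𝓡 : Finset (Pat d)) (p : (∀ j, X j) → Pat d → ℝ) : Prop :=
  ∀ ℓ, ∀ r ∈ 𝓡, 0 < p ℓ r

/-- Selection odds `O_r(ℓ) = p_r(ℓ, r) / p_r(ℓ, PA(r))`. -/
def odds (p : (∀ j, X j) → Pat d → ℝ) (PA : Pat d → Finset (Pat d)) (r : Pat d)
    (ℓ : ∀ j, X j) : ℝ :=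
  obsP p r ℓ r / obsPA p r ℓ (PA r)

/-- A regular pattern graph on `𝓡`: `1_d` is a source, and every other pattern in `𝓡`
has a nonempty parent set inside `𝓡` consisting of strictly larger patterns. -/
def IsRegularGraph (𝓡 : Finset (Pat d)) (PA : Pat d → Finset (Pat d)) : Prop :=
  PA (allOnes d) = ∅ ∧
    ∀ r ∈ 𝓡, r ≠ allOnes d → (PA r).Nonempty ∧ PA r ⊆ 𝓡 ∧ ∀ s ∈ PA r, r < s

/-- The selection odds model of `p` factorizes with respect to the pattern graph. -/
def SelOddsFactorizes (𝓡 : Finset (Pat d)) (PA : Pat d → Finset (Pat d))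
    (p : (∀ j, X j) → Pat d → ℝ) : Prop :=
  ∀ r ∈ 𝓡, r ≠ allOnes d → ∀ ℓ, p ℓ r = jointA p ℓ (PA r) * odds p PA r ℓ

/-- The pattern mixture model of `p` factorizes with respect to the pattern graph. -/
def PMMFactorizes (𝓡 : Finset (Pat d)) (PA : Pat d → Finset (Pat d))
    (p : (∀ j, X j) → Pat d → ℝ) : Prop :=
  ∀ r ∈ 𝓡, r ≠ allOnes d → ∀ ℓ,
    p ℓ r * obsPA p r ℓ (PA r) = jointA p ℓ (PA r) * obsP p r ℓ r

/-- A path from `u` to `v` in the pattern graph: a nonempty sequence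
`u = r_0, r_1, …, r_m = v` of patterns in `𝓡` with `r_i ∈ PA(r_{i+1})`. -/
def IsPath (𝓡 : Finset (Pat d)) (PA : Pat d → Finset (Pat d)) (u v : Pat d)
    (Ξ : List (Pat d)) : Prop :=
  Ξ ≠ [] ∧ Ξ.head? = some u ∧ Ξ.getLast? = some v ∧ (∀ q ∈ Ξ, q ∈ 𝓡) ∧
    Ξ.Chain' (fun a b => a ∈ PA b)


section AuxLemmas

variable {d : ℕ} {X : Fin d → Type*} [∀ j, Fintype (X j)] [∀ j, DecidableEq (X j)]

lemma agree_refl' (r : Pat d) (ℓ : ∀ j, X j) : agree r ℓ ℓ := fun _ _ => rfl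

lemma agree_symm' {r : Pat d} {ℓ ℓ' : ∀ j, X j} (h : agree r ℓ ℓ') : agree r ℓ' ℓ :=
  fun j hj => (h j hj).symm

lemma agree_trans' {r : Pat d} {a b c : ∀ j, X j} (h1 : agree r a b) (h2 : agree r b c) :
    agree r a c := fun j hj => (h1 j hj).trans (h2 j hj)

lemma agree_mono' {r s : Pat d} (hrs : r ≤ s) {ℓ ℓ' : ∀ j, X j} (h : agree s ℓ ℓ') :
    agree r ℓ ℓ' := by
  intro j hj
  apply h j
  have := hrs j
  rw [hj] at this
  cases hsj : s j
  · rw [hsj] at this; exact absurd this (by simp)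
  · rfl

lemma filter_agree_congr' {r : Pat d} {ℓ ℓ' : ∀ j, X j} (h : agree r ℓ ℓ') :
    Finset.univ.filter (fun x => agree r ℓ x) = Finset.univ.filter (fun x => agree r ℓ' x) := by
  ext x
  simp only [Finset.mem_filter, Finset.mem_univ, true_and]
  exact ⟨fun hx => agree_trans' (agree_symm' h) hx, fun hx => agree_trans' h hx⟩

lemma obsP_congr' (p : (∀ j, X j) → Pat d → ℝ) {r : Pat d} {ℓ ℓ' : ∀ j, X j}
    (h : agree r ℓ ℓ') (t : Pat d) : obsP p r ℓ t = obsP p r ℓ' t := by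
  unfold obsP
  rw [filter_agree_congr' h]

lemma list_prod_map_eq_prod_range {α : Type*} (L : List α) (f : α → ℝ) (dflt : α) :
    (L.map f).prod = ∏ i ∈ Finset.range L.length, f (L.getD i dflt) := by
  induction L with
  | nil => simp
  | cons a l ih =>
    rw [List.map_cons, List.prod_cons, ih, List.length_cons, Finset.prod_range_succ']
    simp only [List.getD_cons_succ, List.getD_cons_zero]
    rw [mul_comm]

end AuxLemmas

/-- **Tree graphs (Appendix: closed-form regression functions).** In a tree regular pattern
graph, along the unique path `1_d = s_0, s_1, …, s_m = r`, the path regression function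
`μ_{Ξ,r}` is the iterated conditional expectation
`E[E[⋯E[θ(L)|L_{s_1}, R = s_0]⋯ |L_{s_{m-1}}, R = s_{m-2}] | L_{s_m}, R = s_{m-1}]`. -/
theorem tree_graph_iterated_conditional_expectation [∀ j, Nonempty (X j)]
    (𝓡 : Finset (Pat d)) (h𝓡 : allOnes d ∈ 𝓡)
    (PA : Pat d → Finset (Pat d)) (hG : IsRegularGraph 𝓡 PA)
    (hTree : ∀ r ∈ 𝓡, r ≠ allOnes d → ∃ s, PA r = {s})
    (p : (∀ j, X j) → Pat d → ℝ)
    (hpmf : IsJointPMF 𝓡 p) (hpos : MargPos 𝓡 p)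
    (θ : (∀ j, X j) → ℝ)
    (r : Pat d) (hr : r ∈ 𝓡) (hr1 : r ≠ allOnes d)
    (Ξ : List (Pat d)) (hΞ : IsPath 𝓡 PA (allOnes d) r Ξ)
    (h : ℕ → (∀ j, X j) → ℝ)
    (hh0 : h 0 = θ)
    (hhk : ∀ k, k + 1 < Ξ.length → ∀ ℓ, h (k + 1) ℓ =
      (∑ ℓ' ∈ univ.filter (fun ℓ' => agree (Ξ.getD (k + 1) (allOnes d)) ℓ ℓ'),
          h k ℓ' * p ℓ' (Ξ.getD k (allOnes d)))
        / obsP p (Ξ.getD (k + 1) (allOnes d)) ℓ (Ξ.getD k (allOnes d))) :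
    ∀ ℓ, (∑ ℓ' ∈ univ.filter (fun ℓ' => agree r ℓ ℓ'),
        θ ℓ' * p ℓ' (allOnes d) *
          (Ξ.map fun τ => if r < τ ∧ τ ≠ allOnes d then odds p PA τ ℓ' else 1).prod)
      / obsPA p r ℓ (PA r) = h (Ξ.length - 1) ℓ := by
  classical
  obtain ⟨hΞne, hhead, hlast, hmemR, hchain⟩ := hΞ
  set n := Ξ.length with hn
  have hnpos : 0 < n := List.length_pos_iff.2 hΞne
  set sq : ℕ → Pat d := fun i => Ξ.getD i (allOnes d) with hsq
  have hq : ∀ i, Ξ.getD i (allOnes d) = sq i := fun _ => rfl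
  simp only [hq] at hhk
  -- basic facts about the path
  have hget : ∀ i (h : i < n), sq i = Ξ.get ⟨i, h⟩ := by
    intro i h
    simp only [hsq]
    rw [List.getD_eq_getElem Ξ _ h]
    simp [List.get_eq_getElem]
  have hs0 : sq 0 = allOnes d := by
    cases hΞ : Ξ with
    | nil => exact absurd hΞ hΞne
    | cons a l =>
      rw [hΞ] at hhead
      simp only [List.head?_cons, Option.some.injEq] at hhead
      simp [hsq, hΞ, hhead]
  have hslast : sq (n - 1) = r := by
    have h1 := List.getLast?_eq_getLast hΞne
    rw [hlast] at h1
    have h2 : Ξ.getLast hΞne = r := (Option.some.inj h1).symm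
    rw [hget (n - 1) (by omega), ← h2, List.getLast_eq_getElem hΞne]
    simp [List.get_eq_getElem, ← hn]
  have hmem : ∀ i, i < n → sq i ∈ 𝓡 := by
    intro i h
    rw [hget i h]
    exact hmemR _ (List.get_mem Ξ ⟨i, h⟩)
  have hch : ∀ i, i + 1 < n → sq i ∈ PA (sq (i + 1)) := by
    intro i hi
    have := List.isChain_iff_getElem.1 hchain i (by omega)
    rw [hget i (by omega), hget (i + 1) hi]
    exact this
  have hne1 : ∀ i, i + 1 < n → sq (i + 1) ≠ allOnes d := by
    intro i hi hcon
    have := hch i hi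
    rw [hcon, hG.1] at this
    exact absurd this (Finset.notMem_empty _)
  have hPA : ∀ i, i + 1 < n → PA (sq (i + 1)) = {sq i} := by
    intro i hi
    obtain ⟨t, ht⟩ := hTree _ (hmem (i + 1) hi) (hne1 i hi)
    have := hch i hi
    rw [ht] at this ⊢
    rw [Finset.mem_singleton] at this
    rw [this]
  have hlt : ∀ i, i + 1 < n → sq (i + 1) < sq i := by
    intro i hi
    exact (hG.2 _ (hmem (i + 1) hi) (hne1 i hi)).2.2 _ (hch i hi)
  have hltt : ∀ j, j < n → ∀ i, i < j → sq j < sq i := by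
    intro j
    induction j with
    | zero => intro _ i hi; omega
    | succ j ih =>
      intro hj i hi
      rcases Nat.lt_succ_iff_lt_or_eq.1 hi with h | h
      · exact (hlt j hj).trans (ih (by omega) i h)
      · subst h; exact hlt i hj
  -- the key induction: closed form for the iterated conditional expectations
  have key : ∀ k, k + 1 < n → ∀ ℓ, h (k + 1) ℓ =
      (∑ ℓ' ∈ univ.filter (fun ℓ' => agree (sq (k + 1)) ℓ ℓ'),
        θ ℓ' * p ℓ' (allOnes d) * ∏ i ∈ Finset.Ico 1 (k + 1), odds p PA (sq i) ℓ')
        / obsP p (sq (k + 1)) ℓ (sq k) := by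
    intro k
    induction k with
    | zero =>
      intro hk ℓ
      rw [hhk 0 hk ℓ, hh0]
      congr 1
      apply Finset.sum_congr rfl
      intro ℓ' _
      rw [hs0]
      simp
    | succ k ih =>
      intro hk ℓ
      have hk1 : k + 1 < n := by omega
      rw [hhk (k + 1) hk ℓ]
      congr 1
      have hle : sq (k + 1 + 1) ≤ sq (k + 1) := (hlt (k + 1) hk).le
      have hstep : ∀ ℓ', h (k + 1) ℓ' * p ℓ' (sq (k + 1)) =
          ∑ ℓ'' ∈ univ.filter (fun ℓ'' => agree (sq (k + 1)) ℓ' ℓ''),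
            θ ℓ'' * p ℓ'' (allOnes d) * (∏ i ∈ Finset.Ico 1 (k + 1), odds p PA (sq i) ℓ'')
              / obsP p (sq (k + 1)) ℓ'' (sq k) * p ℓ' (sq (k + 1)) := by
        intro ℓ'
        rw [ih hk1 ℓ', div_mul_eq_mul_div, Finset.sum_mul, Finset.sum_div]
        apply Finset.sum_congr rfl
        intro ℓ'' hℓ''
        rw [Finset.mem_filter] at hℓ''
        rw [obsP_congr' p hℓ''.2 (sq k)]
        ring
      calc ∑ ℓ' ∈ univ.filter (fun ℓ' => agree (sq (k + 1 + 1)) ℓ ℓ'),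
              h (k + 1) ℓ' * p ℓ' (sq (k + 1))
          = ∑ ℓ' ∈ univ.filter (fun ℓ' => agree (sq (k + 1 + 1)) ℓ ℓ'),
              ∑ ℓ'' ∈ univ.filter (fun ℓ'' => agree (sq (k + 1)) ℓ' ℓ''),
                θ ℓ'' * p ℓ'' (allOnes d) * (∏ i ∈ Finset.Ico 1 (k + 1), odds p PA (sq i) ℓ'')
                  / obsP p (sq (k + 1)) ℓ'' (sq k) * p ℓ' (sq (k + 1)) :=
            Finset.sum_congr rfl (fun ℓ' _ => hstep ℓ')
        _ = ∑ ℓ'' ∈ univ.filter (fun ℓ'' => agree (sq (k + 1 + 1)) ℓ ℓ''),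
              ∑ ℓ' ∈ univ.filter (fun ℓ' => agree (sq (k + 1)) ℓ'' ℓ'),
                θ ℓ'' * p ℓ'' (allOnes d) * (∏ i ∈ Finset.Ico 1 (k + 1), odds p PA (sq i) ℓ'')
                  / obsP p (sq (k + 1)) ℓ'' (sq k) * p ℓ' (sq (k + 1)) := by
            apply Finset.sum_comm'
            intro ℓ' ℓ''
            simp only [Finset.mem_filter, Finset.mem_univ, true_and]
            constructor
            · rintro ⟨h1, h2⟩
              exact ⟨agree_symm' h2, agree_trans' h1 (agree_mono' hle h2)⟩
            · rintro ⟨h2, h1⟩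
              exact ⟨agree_trans' h1 (agree_mono' hle h2), agree_symm' h2⟩
        _ = ∑ ℓ'' ∈ univ.filter (fun ℓ'' => agree (sq (k + 1 + 1)) ℓ ℓ''),
              θ ℓ'' * p ℓ'' (allOnes d) *
                ∏ i ∈ Finset.Ico 1 (k + 1 + 1), odds p PA (sq i) ℓ'' := by
            apply Finset.sum_congr rfl
            intro ℓ'' _
            rw [← Finset.mul_sum]
            have hT : ∑ ℓ' ∈ univ.filter (fun ℓ' => agree (sq (k + 1)) ℓ'' ℓ'),
                p ℓ' (sq (k + 1)) = obsP p (sq (k + 1)) ℓ'' (sq (k + 1)) := rfl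
            rw [hT, Finset.prod_Ico_succ_top (a := 1) (b := k + 1) (by omega)]
            unfold odds obsPA
            rw [hPA k hk1, Finset.sum_singleton]
            ring
  -- final assembly
  intro ℓ
  have hn2 : 2 ≤ n := by
    by_contra hcon
    have h1 : n = 1 := by omega
    rw [h1] at hslast
    simp only [Nat.sub_self] at hslast
    rw [hs0] at hslast
    exact hr1 hslast.symm
  have e : n - 2 + 1 = n - 1 := by omega
  have hkey := key (n - 2) (by omega) ℓ
  rw [e] at hkey
  rw [show n - 1 = n - 1 from rfl] at hkey
  rw [hkey]
  have hden : obsPA p r ℓ (PA r) = obsP p (sq (n - 1)) ℓ (sq (n - 2)) := by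
    have hpa := hPA (n - 2) (by omega)
    rw [e] at hpa
    rw [← hslast]
    unfold obsPA
    rw [hpa, Finset.sum_singleton]
  have hprod : ∀ ℓ' : ∀ j, X j,
      (Ξ.map fun τ => if r < τ ∧ τ ≠ allOnes d then odds p PA τ ℓ' else 1).prod
        = ∏ i ∈ Finset.Ico 1 (n - 1), odds p PA (sq i) ℓ' := by
    intro ℓ'
    rw [list_prod_map_eq_prod_range Ξ _ (allOnes d)]
    simp only [hq, ← hn]
    have hcg : ∀ i ∈ Finset.range n,
        (if r < sq i ∧ sq i ≠ allOnes d then odds p PA (sq i) ℓ' else 1)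
          = (if i ∈ Finset.Ico 1 (n - 1) then odds p PA (sq i) ℓ' else 1) := by
      intro i hi
      rw [Finset.mem_range] at hi
      rcases Nat.lt_or_ge i 1 with h0 | h1
      · have hi0 : i = 0 := by omega
        subst hi0
        rw [hs0]
        simp [Finset.mem_Ico]
      · rcases Nat.lt_or_ge i (n - 1) with h2 | h2
        · have hc1 : r < sq i := by
            rw [← hslast]
            exact hltt (n - 1) (by omega) i h2
          have hc2 : sq i ≠ allOnes d := by
            have := hne1 (i - 1) (by omega)
            rwa [show i - 1 + 1 = i from by omega] at this
          rw [if_pos ⟨hc1, hc2⟩, if_pos (Finset.mem_Ico.2 ⟨h1, h2⟩)]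
        · have hi1 : i = n - 1 := by omega
          subst hi1
          rw [hslast]
          simp [Finset.mem_Ico]
    rw [Finset.prod_congr rfl hcg, Finset.prod_ite_mem,
      show Finset.range n ∩ Finset.Ico 1 (n - 1) = Finset.Ico 1 (n - 1) from by
        ext i; simp [Finset.mem_Ico]; omega]
  have hnum : (∑ ℓ' ∈ univ.filter (fun ℓ' => agree r ℓ ℓ'),
      θ ℓ' * p ℓ' (allOnes d) *
        (Ξ.map fun τ => if r < τ ∧ τ ≠ allOnes d then odds p PA τ ℓ' else 1).prod)
      = ∑ ℓ' ∈ univ.filter (fun ℓ' => agree (sq (n - 1)) ℓ ℓ'),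
          θ ℓ' * p ℓ' (allOnes d) * ∏ i ∈ Finset.Ico 1 (n - 1), odds p PA (sq i) ℓ' := by
    apply Finset.sum_congr
    · rw [hslast]
    · intro ℓ' _
      rw [hprod ℓ']
  rw [hnum, hden]
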